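/- Let k ≥ 2, g ≥ 1, and let C be a ℤ_k-code of length n (a ℤ_k-submodule of ℤ_k^n). Then the cycle index of the permutation group G(C^g) satisfies, as an identity in the commuting indeterminates s_1, s_2, s_3, …: Σ_{h ∈ C^g} Π_{ℓ ≥ 1} s_ℓ^{c_ℓ(π_h)} = Σ_{h=(a_1,…,a_n) ∈ C^g} Π_{i=1}^{n} s_{d_i(h)}^{k^g / d_i(h)}, where for h with columns a_i = (a_{1i}, …, a_{gi}) one sets d_i(h) = k / gcd(a_{1i}, …, a_{gi}, k). -/

import Mathlib

open scoped Classical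

/-- The permutation `π_h` of `{1,…,n} × A` induced by `h = (a_1, …, a_n) ∈ A^n`,
sending `(i, x)` to `(i, x + a_i)`. -/
def translationPerm {A : Type*} [AddGroup A] {n : ℕ} (h : Fin n → A) :
    Equiv.Perm (Fin n × A) :=
  Equiv.prodShear (Equiv.refl (Fin n)) (fun i => Equiv.addRight (h i))

/-- `c_ℓ(σ)`: the number of cycles of length `ℓ` in the cycle decomposition of `σ`,
fixed points being counted as cycles of length `1`. -/
noncomputable def cycleCount {α : Type*} [Fintype α] (σ : Equiv.Perm α) (ℓ : ℕ) : ℕ :=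
  if ℓ = 1 then (Finset.univ.filter fun x => σ x = x).card else σ.cycleType.count ℓ

/- ### Auxiliary number-theoretic lemmas -/

lemma nat_div_dvd_div_iff {k d c : ℕ} (hk : k ≠ 0) (hd : d ∣ k) (hc : c ∣ k) :
    k / d ∣ k / c ↔ c ∣ d := by
  obtain ⟨u, hu⟩ := hd
  obtain ⟨w, hw⟩ := hc
  have hd0 : d ≠ 0 := by rintro rfl; simp_all
  have hc0 : c ≠ 0 := by rintro rfl; simp_all
  have hu0 : u ≠ 0 := by rintro rfl; simp_all
  have h1 : k / d = u := by rw [hu, Nat.mul_div_cancel_left _ (Nat.pos_of_ne_zero hd0)]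
  have h2 : k / c = w := by rw [hw, Nat.mul_div_cancel_left _ (Nat.pos_of_ne_zero hc0)]
  rw [h1, h2]
  constructor
  · rintro ⟨t, ht⟩
    refine ⟨t, ?_⟩
    have : d * u = c * t * u := by rw [← hu, hw, ht]; ring
    exact Nat.eq_of_mul_eq_mul_right (Nat.pos_of_ne_zero hu0) this
  · rintro ⟨s, hs⟩
    refine ⟨s, ?_⟩
    have : c * w = c * (s * u) := by rw [← hw, hu, hs]; ring
    have := Nat.eq_of_mul_eq_mul_left (Nat.pos_of_ne_zero hc0) this
    rw [this, Nat.mul_comm]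

lemma nat_lcm_div {k d e : ℕ} (hk : k ≠ 0) (hd : d ∣ k) (he : e ∣ k) :
    Nat.lcm (k / d) (k / e) = k / Nat.gcd d e := by
  have hg : Nat.gcd d e ∣ k := (Nat.gcd_dvd_left d e).trans hd
  apply Nat.dvd_antisymm
  · exact Nat.lcm_dvd ((nat_div_dvd_div_iff hk hd hg).mpr (Nat.gcd_dvd_left _ _))
      ((nat_div_dvd_div_iff hk he hg).mpr (Nat.gcd_dvd_right _ _))
  · set m := Nat.lcm (k / d) (k / e) with hm
    have hmk : m ∣ k := Nat.lcm_dvd (Nat.div_dvd_of_dvd hd) (Nat.div_dvd_of_dvd he)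
    have hd0 : d ≠ 0 := by rintro rfl; simp_all
    have he0 : e ≠ 0 := by rintro rfl; simp_all
    have hm0 : m ≠ 0 := Nat.lcm_ne_zero
      (Nat.div_pos (Nat.le_of_dvd (Nat.pos_of_ne_zero hk) hd) (Nat.pos_of_ne_zero hd0)).ne'
      (Nat.div_pos (Nat.le_of_dvd (Nat.pos_of_ne_zero hk) he) (Nat.pos_of_ne_zero he0)).ne'
    set c := k / m with hcdef
    have hc : c ∣ k := Nat.div_dvd_of_dvd hmk
    have hmc : m = k / c := by rw [hcdef, Nat.div_div_self hmk hk]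
    have hcd : c ∣ d := (nat_div_dvd_div_iff hk hd hc).mp (hmc ▸ Nat.dvd_lcm_left _ _)
    have hce : c ∣ e := (nat_div_dvd_div_iff hk he hc).mp (hmc ▸ Nat.dvd_lcm_right _ _)
    rw [hmc]
    exact (nat_div_dvd_div_iff hk hg hc).mpr (Nat.dvd_gcd hcd hce)

lemma gcd_gcd_distrib (k x y : ℕ) :
    Nat.gcd k (Nat.gcd x y) = Nat.gcd (Nat.gcd k x) (Nat.gcd k y) := by
  apply Nat.dvd_antisymm
  · exact Nat.dvd_gcd
      (Nat.dvd_gcd (Nat.gcd_dvd_left _ _) ((Nat.gcd_dvd_right _ _).trans (Nat.gcd_dvd_left _ _)))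
      (Nat.dvd_gcd (Nat.gcd_dvd_left _ _) ((Nat.gcd_dvd_right _ _).trans (Nat.gcd_dvd_right _ _)))
  · exact Nat.dvd_gcd ((Nat.gcd_dvd_left _ _).trans (Nat.gcd_dvd_left _ _))
      (Nat.dvd_gcd ((Nat.gcd_dvd_left _ _).trans (Nat.gcd_dvd_right _ _))
        ((Nat.gcd_dvd_right _ _).trans (Nat.gcd_dvd_right _ _)))

lemma finset_lcm_div {k : ℕ} (hk : k ≠ 0) {ι : Type*} (s : Finset ι) (v : ι → ℕ) :
    s.lcm (fun j => k / Nat.gcd k (v j)) = k / Nat.gcd k (s.gcd v) := by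
  induction s using Finset.induction with
  | empty => simp [Nat.gcd_zero_right, Nat.div_self (Nat.pos_of_ne_zero hk)]
  | insert _ _ ha ih =>
      rw [Finset.lcm_insert, Finset.gcd_insert, ih, lcm_eq_nat_lcm,
        nat_lcm_div hk (Nat.gcd_dvd_left _ _) (Nat.gcd_dvd_left _ _),
        ← gcd_gcd_distrib]
      rfl

/- ### Auxiliary group-theoretic lemmas -/

lemma addOrderOf_pi {ι M : Type*} [Fintype ι] [AddGroup M] [Fintype M] (f : ι → M) :
    addOrderOf f = Finset.univ.lcm fun j => addOrderOf (f j) := by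
  apply Nat.dvd_antisymm
  · rw [addOrderOf_dvd_iff_nsmul_eq_zero]
    funext j
    have hdvd : addOrderOf (f j) ∣ Finset.univ.lcm fun j => addOrderOf (f j) :=
      Finset.dvd_lcm (Finset.mem_univ j)
    have h0 : (Finset.univ.lcm fun j => addOrderOf (f j)) • f j = 0 :=
      addOrderOf_dvd_iff_nsmul_eq_zero.mp hdvd
    simpa using h0
  · apply Finset.lcm_dvd
    intro j _
    rw [addOrderOf_dvd_iff_nsmul_eq_zero]
    exact congrFun (addOrderOf_nsmul_eq_zero f) j

lemma translationPerm_pow {A : Type*} [AddGroup A] {n : ℕ} (a : Fin n → A) (m : ℕ)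
    (p : Fin n × A) : (translationPerm a ^ m) p = (p.1, p.2 + m • a p.1) := by
  induction m with
  | zero => simp
  | succ m ih =>
      rw [pow_succ', Equiv.Perm.mul_apply, ih]
      show (p.1, p.2 + m • a p.1 + a p.1) = _
      rw [succ_nsmul, add_assoc]

lemma minimalPeriod_translationPerm {A : Type*} [AddGroup A] [Fintype A] {n : ℕ}
    (a : Fin n → A) (p : Fin n × A) :
    Function.minimalPeriod (translationPerm a) p = addOrderOf (a p.1) := by
  have key : ∀ m : ℕ,
      Function.IsPeriodicPt (⇑(translationPerm a)) m p ↔ addOrderOf (a p.1) ∣ m := by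
    intro m
    rw [Function.IsPeriodicPt, Function.IsFixedPt, Equiv.Perm.iterate_eq_pow,
      translationPerm_pow, addOrderOf_dvd_iff_nsmul_eq_zero]
    constructor
    · intro hpp
      have := congrArg Prod.snd hpp
      simp only at this
      rwa [add_eq_left] at this
    · intro hz; rw [hz, add_zero]
  apply Nat.dvd_antisymm
  · exact Function.IsPeriodicPt.minimalPeriod_dvd ((key _).mpr dvd_rfl)
  · exact (key _).mp (Function.isPeriodicPt_minimalPeriod _ _)

lemma card_support_cycleOf_eq {α : Type*} [Fintype α] (σ : Equiv.Perm α) (x : α)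
    (hx : σ x ≠ x) : (σ.cycleOf x).support.card = Function.minimalPeriod σ x := by
  have hc : (σ.cycleOf x).IsCycle := Equiv.Perm.isCycle_cycleOf σ hx
  rw [← hc.orderOf]
  have hxs : (σ.cycleOf x) x ≠ x := by rwa [Equiv.Perm.cycleOf_apply_self]
  apply Nat.dvd_antisymm
  · rw [orderOf_dvd_iff_pow_eq_one, hc.pow_eq_one_iff' hxs, Equiv.Perm.cycleOf_pow_apply_self]
    exact Function.isPeriodicPt_minimalPeriod σ x
  · apply Function.IsPeriodicPt.minimalPeriod_dvd
    show (σ ^ orderOf (σ.cycleOf x)) x = x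
    rw [← Equiv.Perm.cycleOf_pow_apply_self, pow_orderOf_eq_one]
    rfl

lemma cycleCount_eq_card_filter {α : Type*} [Fintype α] (σ : Equiv.Perm α)
    {ℓ : ℕ} (hℓ2 : 2 ≤ ℓ) :
    cycleCount σ ℓ = (σ.cycleFactorsFinset.filter fun c => c.support.card = ℓ).card := by
  rw [cycleCount, if_neg (by omega), Multiset.count_eq_card_filter_eq,
    Equiv.Perm.cycleType_def, Multiset.filter_map, Multiset.card_map, Finset.card,
    Finset.filter_val]
  congr 1
  apply Multiset.filter_congr
  intro c _
  simp [eq_comm]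

lemma cycleCount_zero {α : Type*} [Fintype α] (σ : Equiv.Perm α) : cycleCount σ 0 = 0 := by
  rw [cycleCount, if_neg (by omega)]
  refine Multiset.count_eq_zero.mpr fun h => ?_
  exact absurd (Equiv.Perm.two_le_of_mem_cycleType h) (by omega)

lemma cycleCount_mul {α : Type*} [Fintype α] (σ : Equiv.Perm α) {ℓ : ℕ} (hℓ : 1 ≤ ℓ) :
    cycleCount σ ℓ * ℓ =
      (Finset.univ.filter fun x => Function.minimalPeriod σ x = ℓ).card := by
  rcases eq_or_lt_of_le hℓ with h1 | h2
  · subst h1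
    rw [mul_one, cycleCount, if_pos rfl]
    congr 1
    ext x
    simp only [Finset.mem_filter, Finset.mem_univ, true_and]
    rw [Function.minimalPeriod_eq_one_iff_isFixedPt]
    exact ⟨fun h => h, fun h => h⟩
  · have hℓ2 : 2 ≤ ℓ := h2
    rw [cycleCount_eq_card_filter σ hℓ2]
    have hmem : ∀ x ∈ (Finset.univ.filter fun x => Function.minimalPeriod σ x = ℓ),
        σ.cycleOf x ∈ σ.cycleFactorsFinset.filter fun c => c.support.card = ℓ := by
      intro x hx
      simp only [Finset.mem_filter, Finset.mem_univ, true_and] at hx ⊢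
      have hfix : σ x ≠ x := by
        intro h
        have : Function.minimalPeriod σ x = 1 :=
          Function.minimalPeriod_eq_one_iff_isFixedPt.mpr h
        omega
      exact ⟨Equiv.Perm.cycleOf_mem_cycleFactorsFinset_iff.mpr (Equiv.Perm.mem_support.2 hfix),
        by rw [card_support_cycleOf_eq σ x hfix, hx]⟩
    rw [Finset.card_eq_sum_card_fiberwise hmem]
    have hfiber : ∀ c ∈ (σ.cycleFactorsFinset.filter fun c => c.support.card = ℓ),
        ((Finset.univ.filter fun x => Function.minimalPeriod σ x = ℓ).filter
          fun x => σ.cycleOf x = c) = c.support := by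
      intro c hc
      simp only [Finset.mem_filter] at hc
      obtain ⟨hcf, hcard⟩ := hc
      ext y
      simp only [Finset.mem_filter, Finset.mem_univ, true_and]
      constructor
      · rintro ⟨hy, hcy⟩
        have hfix : σ y ≠ y := by
          intro h
          have : Function.minimalPeriod σ y = 1 :=
            Function.minimalPeriod_eq_one_iff_isFixedPt.mpr h
          omega
        rw [← hcy, Equiv.Perm.mem_support_cycleOf_iff]
        exact ⟨Equiv.Perm.SameCycle.refl _ _, Equiv.Perm.mem_support.2 hfix⟩
      · intro hy
        have hcy : σ.cycleOf y = c := (Equiv.Perm.cycle_is_cycleOf hy hcf).symm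
        have hfix : σ y ≠ y := by
          have h1 := (Equiv.Perm.mem_cycleFactorsFinset_iff.mp hcf).2 y hy
          have h2 := Equiv.Perm.mem_support.1 hy
          rw [h1] at h2
          exact h2
        refine ⟨?_, hcy⟩
        rw [← card_support_cycleOf_eq σ y hfix, hcy, hcard]
    rw [Finset.sum_congr rfl (fun c hc => by rw [hfiber c hc])]
    rw [Finset.sum_congr rfl (fun c hc => (Finset.mem_filter.mp hc).2)]
    rw [Finset.sum_const, smul_eq_mul]

/- ### The key per-summand computation -/

lemma key_prod {A : Type*} [AddCommGroup A] [Fintype A] {n : ℕ} (a : Fin n → A) :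
    ∏ᶠ ℓ : ℕ, (MvPolynomial.X ℓ : MvPolynomial ℕ ℤ) ^ cycleCount (translationPerm a) ℓ
      = ∏ i : Fin n, (MvPolynomial.X (addOrderOf (a i)) : MvPolynomial ℕ ℤ) ^
          (Fintype.card A / addOrderOf (a i)) := by
  set σ := translationPerm a with hσ
  set d : Fin n → ℕ := fun i => addOrderOf (a i) with hd
  set N := Fintype.card A with hN
  have hdpos : ∀ i, 1 ≤ d i := fun i => addOrderOf_pos (a i)
  have hddvd : ∀ i, d i ∣ N := fun i => addOrderOf_dvd_card
  -- Step A : the cycle count formula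
  have stepA : ∀ ℓ : ℕ, 1 ≤ ℓ →
      cycleCount σ ℓ = ∑ i : Fin n, if d i = ℓ then N / ℓ else 0 := by
    intro ℓ hℓ
    apply Nat.eq_of_mul_eq_mul_right (show 0 < ℓ by omega)
    rw [cycleCount_mul σ hℓ]
    have hfilt : (Finset.univ.filter fun p : Fin n × A => Function.minimalPeriod σ p = ℓ)
        = Finset.univ.filter fun p : Fin n × A => d p.1 = ℓ := by
      apply Finset.filter_congr
      intro p _
      rw [minimalPeriod_translationPerm a p]
    rw [hfilt, Finset.card_filter, Fintype.sum_prod_type, Finset.sum_mul]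
    apply Finset.sum_congr rfl
    intro i _
    by_cases hdi : d i = ℓ
    · rw [if_pos hdi]
      have hln : ℓ ∣ N := hdi ▸ hddvd i
      rw [Nat.div_mul_cancel hln]
      simp [hdi, hN]
    · rw [if_neg hdi]
      simp [hdi]
  -- Step C : finite support
  have hsub : (Function.mulSupport fun ℓ : ℕ =>
      (MvPolynomial.X ℓ : MvPolynomial ℕ ℤ) ^ cycleCount σ ℓ)
      ⊆ ↑(Finset.image d Finset.univ) := by
    intro ℓ hℓ
    by_contra hnot
    apply hℓ
    have hcc : cycleCount σ ℓ = 0 := by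
      rcases Nat.eq_zero_or_pos ℓ with h0 | h1
      · rw [h0]; exact cycleCount_zero σ
      · rw [stepA ℓ h1]
        apply Finset.sum_eq_zero
        intro i _
        rw [if_neg]
        intro hdi
        exact hnot (hdi ▸ Finset.mem_coe.mpr (Finset.mem_image_of_mem d (Finset.mem_univ i)))
    show (MvPolynomial.X ℓ : MvPolynomial ℕ ℤ) ^ cycleCount σ ℓ = 1
    rw [hcc, pow_zero]
  rw [finprod_eq_prod_of_mulSupport_subset _ hsub]
  -- Step D/E/F
  have stepD : ∀ ℓ ∈ Finset.image d Finset.univ,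
      (MvPolynomial.X ℓ : MvPolynomial ℕ ℤ) ^ cycleCount σ ℓ
        = ∏ i : Fin n, (MvPolynomial.X ℓ : MvPolynomial ℕ ℤ) ^ (if d i = ℓ then N / ℓ else 0) := by
    intro ℓ hℓ
    obtain ⟨i0, _, hi0⟩ := Finset.mem_image.mp hℓ
    have hℓ1 : 1 ≤ ℓ := hi0 ▸ hdpos i0
    rw [stepA ℓ hℓ1, ← Finset.prod_pow_eq_pow_sum]
  rw [Finset.prod_congr rfl stepD, Finset.prod_comm]
  apply Finset.prod_congr rfl
  intro i _
  rw [Finset.prod_eq_single (d i)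
    (fun b _ hb => by rw [if_neg (fun h => hb h.symm), pow_zero])
    (fun h => absurd (Finset.mem_image_of_mem d (Finset.mem_univ i)) h)]
  rw [if_pos rfl]

/- ### Main theorem -/

theorem stmt_13 (k g n : ℕ) [NeZero k] (hk : 2 ≤ k) (hg : 0 < g)
    (C : Submodule (ZMod k) (Fin n → ZMod k)) :
    ∑ h : Fin g → C, ∏ᶠ ℓ : ℕ, (MvPolynomial.X ℓ : MvPolynomial ℕ ℤ) ^
          cycleCount (translationPerm fun i => fun j => (h j : Fin n → ZMod k) i) ℓ
      = ∑ h : Fin g → C, ∏ i : Fin n,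
          (MvPolynomial.X
              (k / Nat.gcd (Finset.univ.gcd fun j => ((h j : Fin n → ZMod k) i).val) k) :
            MvPolynomial ℕ ℤ) ^
            (k ^ g /
              (k / Nat.gcd (Finset.univ.gcd fun j => ((h j : Fin n → ZMod k) i).val) k)) := by
  have hk0 : k ≠ 0 := NeZero.ne k
  apply Finset.sum_congr rfl
  intro h _
  rw [key_prod (fun i => fun j => (h j : Fin n → ZMod k) i)]
  have hcard : Fintype.card (Fin g → ZMod k) = k ^ g := by simp [ZMod.card]
  apply Finset.prod_congr rfl
  intro i _
  have horder : addOrderOf (fun j => (h j : Fin n → ZMod k) i)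
      = k / Nat.gcd (Finset.univ.gcd fun j => ((h j : Fin n → ZMod k) i).val) k := by
    rw [addOrderOf_pi]
    have heach : ∀ j : Fin g, addOrderOf ((h j : Fin n → ZMod k) i)
        = k / Nat.gcd k (((h j : Fin n → ZMod k) i).val) := by
      intro j
      conv_lhs => rw [← ZMod.natCast_rightInverse ((h j : Fin n → ZMod k) i)]
      exact ZMod.addOrderOf_coe _ hk0
    rw [Finset.lcm_congr rfl (fun j _ => heach j)]
    rw [finset_lcm_div hk0 Finset.univ (fun j => ((h j : Fin n → ZMod k) i).val)]
    rw [Nat.gcd_comm]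
  rw [horder, hcard]
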